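/- With σ a modulus of continuity such that ζ(r) := r σ(r) is a strictly increasing surjection [0,∞) → [0,∞), if f ∈ C₀^{1,σ}(ℝ²) with [f_{x_i}]_σ ≠ 0 then ‖f_{x_i}‖_∞ ≤ 2 σ(ζ^{-1}(‖f‖_∞ / [f_{x_i}]_σ)) · [f_{x_i}]_σ. -/

import Mathlib

theorem stmt17 (σ : ℝ → ℝ) (hσmono : Monotone σ) (hσ0 : σ 0 = 0)
    (hσpos : ∀ r > (0:ℝ), 0 < σ r)
    (hζmono : StrictMonoOn (fun r => r * σ r) (Set.Ici 0))
    (ζinv : ℝ → ℝ)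
    (hζinv : ∀ t : ℝ, 0 ≤ t → 0 ≤ ζinv t ∧ ζinv t * σ (ζinv t) = t)
    (f : EuclideanSpace ℝ (Fin 2) → ℝ)
    (hf : ContDiff ℝ 1 f) (hsupp : HasCompactSupport f) (i : Fin 2)
    (L Mf : ℝ) (hLpos : 0 < L) (hMf0 : 0 ≤ Mf) (hMf : ∀ x, |f x| ≤ Mf)
    (hL : ∀ x y, |fderiv ℝ f x (EuclideanSpace.single i 1)
                  - fderiv ℝ f y (EuclideanSpace.single i 1)| ≤ L * σ (dist x y)) :
    ∀ x, |fderiv ℝ f x (EuclideanSpace.single i 1)|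
      ≤ 2 * σ (ζinv (Mf / L)) * L := by
  intro x
  set e := EuclideanSpace.single i (1:ℝ) with he
  have hne : ‖e‖ = 1 := by
    rw [he, EuclideanSpace.norm_single, norm_one]
  rcases eq_or_lt_of_le hMf0 with hMf0' | hMfpos
  · -- Mf = 0 : f ≡ 0
    have hf0 : f = fun _ => (0:ℝ) := by
      funext y
      have h1 := hMf y
      rw [← hMf0'] at h1
      exact abs_nonpos_iff.mp h1
    have hz : fderiv ℝ f x = 0 := by rw [hf0]; simp
    rw [hz]
    simp only [ContinuousLinearMap.zero_apply, abs_zero]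
    have hr0 : 0 ≤ ζinv (Mf / L) := (hζinv _ (by positivity)).1
    have hσr : 0 ≤ σ (ζinv (Mf / L)) := hσ0 ▸ hσmono hr0
    positivity
  · -- Mf > 0
    have htpos : 0 < Mf / L := div_pos hMfpos hLpos
    obtain ⟨hr0, hrσ⟩ := hζinv (Mf / L) htpos.le
    set r := ζinv (Mf / L) with hrdef
    have hrpos : 0 < r := by
      rcases hr0.lt_or_eq with h | h
      · exact h
      · exfalso
        rw [← h, zero_mul] at hrσ
        exact absurd hrσ.symm htpos.ne'
    have hσrpos : 0 < σ r := hσpos r hrpos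
    have hkey : Mf = L * σ r * r := by
      have : L * (r * σ r) = Mf := by rw [hrσ]; field_simp
      nlinarith [this]
    set D := fun y => fderiv ℝ f y e with hD
    have hg : ∀ s : ℝ, HasDerivAt (fun u : ℝ => f (x + u • e)) (D (x + s • e)) s := by
      intro s
      have h1 : HasDerivAt (fun u : ℝ => x + u • e) e s := by
        simpa using ((hasDerivAt_id s).smul_const e).const_add x
      have h2 := ((hf.differentiable one_ne_zero) (x + s • e)).hasFDerivAt
      exact h2.comp_hasDerivAt s h1
    have hh : ∀ s : ℝ, HasDerivAt (fun u : ℝ => f (x + u • e) - u * D x)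
        (D (x + s • e) - D x) s := by
      intro s
      have h1 : HasDerivAt (fun u : ℝ => u * D x) (D x) s := by
        simpa using (hasDerivAt_id s).mul_const (D x)
      exact (hg s).sub h1
    have hbound : ∀ s ∈ Set.Icc (-r) r, ‖D (x + s • e) - D x‖ ≤ L * σ r := by
      intro s hs
      have hdist : dist (x + s • e) x = |s| := by
        rw [dist_eq_norm]
        simp [norm_smul, hne]
      have h1 := hL (x + s • e) x
      rw [hdist] at h1
      have h2 : σ |s| ≤ σ r := hσmono (abs_le.mpr ⟨hs.1, hs.2⟩)
      calc ‖D (x + s • e) - D x‖ ≤ L * σ |s| := h1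
        _ ≤ L * σ r := by nlinarith
    have hMVT := (convex_Icc (-r) r).norm_image_sub_le_of_norm_hasDerivWithin_le
      (f := fun u : ℝ => f (x + u • e) - u * D x)
      (f' := fun s => D (x + s • e) - D x) (C := L * σ r)
      (fun s hs => (hh s).hasDerivWithinAt) hbound
      (Set.mem_Icc.mpr ⟨le_refl _, by linarith⟩)
      (Set.mem_Icc.mpr ⟨by linarith, le_refl _⟩)
    have hnorm : ‖(r:ℝ) - (-r)‖ = 2 * r := by
      rw [Real.norm_eq_abs]
      rw [abs_of_nonneg (by linarith)]
      ring
    rw [hnorm] at hMVT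
    have hexp : (f (x + r • e) - r * D x) - (f (x + (-r) • e) - (-r) * D x)
        = (f (x + r • e) - f (x + (-r) • e)) - 2 * r * D x := by ring
    rw [Real.norm_eq_abs, hexp] at hMVT
    have habs1 : |f (x + r • e) - f (x + (-r) • e)| ≤ 2 * Mf := by
      have := hMf (x + r • e)
      have := hMf (x + (-r) • e)
      have h1 := abs_sub (f (x + r • e)) (f (x + (-r) • e))
      calc |f (x + r • e) - f (x + (-r) • e)|
          ≤ |f (x + r • e)| + |f (x + (-r) • e)| := abs_sub _ _
        _ ≤ 2 * Mf := by linarith [hMf (x + r • e), hMf (x + (-r) • e)]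
    have h2r : |2 * r * D x| ≤ 2 * Mf + (L * σ r) * (2 * r) := by
      have h3 : |2 * r * D x| ≤ |f (x + r • e) - f (x + (-r) • e)|
          + |(f (x + r • e) - f (x + (-r) • e)) - 2 * r * D x| := by
        have := abs_sub_abs_le_abs_sub (2 * r * D x) (f (x + r • e) - f (x + (-r) • e))
        have h4 := abs_add_le (f (x + r • e) - f (x + (-r) • e))
          (-((f (x + r • e) - f (x + (-r) • e)) - 2 * r * D x))
        simp only [abs_neg] at h4
        calc |2 * r * D x|
            = |f (x + r • e) - f (x + (-r) • e)
              + -((f (x + r • e) - f (x + (-r) • e)) - 2 * r * D x)| := by ring_nf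
          _ ≤ _ := by simpa using h4
      linarith [hMVT]
    have hfin : |D x| ≤ 2 * σ r * L := by
      rw [abs_mul, abs_mul] at h2r
      rw [abs_of_nonneg (by norm_num : (0:ℝ) ≤ 2), abs_of_nonneg hrpos.le] at h2r
      nlinarith [h2r, hkey]
    simpa [hD, he] using hfin
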